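/- For every integer n ≥ 4, the size-Ramsey number of the complete 3-uniform hypergraph on n vertices satisfies R̂(K_n^(3)) ≥ (n²/96)·C(R(K_n^(3)), 2), where R(K_n^(3)) is the Ramsey number of K_n^(3) and C(·,2) denotes the binomial coefficient. -/

import Mathlib

/-- A `k`-uniform hypergraph on a finite vertex set of naturals:
each edge is a `k`-element subset of the vertex set. -/
structure KHypergraph (k : ℕ) where
  verts : Finset ℕ
  edges : Finset (Finset ℕ)
  card_eq : ∀ e ∈ edges, e.card = k
  subset_verts : ∀ e ∈ edges, e ⊆ verts

namespace KHypergraph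

/-- `H.IsCopy G f` : the injection `f` embeds `G` into `H` as a subhypergraph. -/
def IsCopy {k : ℕ} (H G : KHypergraph k) (f : ℕ → ℕ) : Prop :=
  Set.InjOn f ↑G.verts ∧ Set.MapsTo f ↑G.verts ↑H.verts ∧
    ∀ e ∈ G.edges, e.image f ∈ H.edges

/-- `H.Arrows G` : every 2-coloring of the edges of `H` yields a monochromatic copy of `G`. -/
def Arrows {k : ℕ} (H G : KHypergraph k) : Prop :=
  ∀ χ : Finset ℕ → Bool, ∃ (f : ℕ → ℕ) (c : Bool),
    H.IsCopy G f ∧ ∀ e ∈ G.edges, χ (e.image f) = c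

/-- The size-Ramsey number `R̂(G)`: the least number of edges of a hypergraph `H` with `H → G`. -/
noncomputable def sizeRamsey {k : ℕ} (G : KHypergraph k) : ℕ :=
  sInf { m | ∃ H : KHypergraph k, H.Arrows G ∧ H.edges.card = m }

/-- The complete `k`-uniform hypergraph on `N` vertices. -/
def completeHG (k N : ℕ) : KHypergraph k where
  verts := Finset.range N
  edges := Finset.powersetCard k (Finset.range N)
  card_eq := fun _ he => (Finset.mem_powersetCard.mp he).2
  subset_verts := fun _ he => (Finset.mem_powersetCard.mp he).1

/-- The Ramsey number `R(G)`: the least `N` with `K_N^(k) → G`. -/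
noncomputable def ramsey {k : ℕ} (G : KHypergraph k) : ℕ :=
  sInf { N | (completeHG k N).Arrows G }

end KHypergraph

namespace SR0
open Finset KHypergraph

/-- Delete one edge from a hypergraph. -/
def erase1 (H : KHypergraph 3) (e₀ : Finset ℕ) : KHypergraph 3 :=
  ⟨H.verts, H.edges.erase e₀, fun e he => H.card_eq e (Finset.mem_of_mem_erase he),
   fun e he => H.subset_verts e (Finset.mem_of_mem_erase he)⟩

lemma mem_completeHG_edges {N : ℕ} {e : Finset ℕ} :
    e ∈ (completeHG 3 N).edges ↔ e ⊆ Finset.range N ∧ e.card = 3 :=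
  Finset.mem_powersetCard

/-- "Good remainder of color `c` for the pair `x,y`" : an `(n-2)`-set `R` avoiding `x,y`,
all of whose fan-triples are edges, and such that `χ₀` gives color `c` to every
3-subset of `{x,y} ∪ R` not containing both `x` and `y`. -/
def good (χ₀ : Finset ℕ → Bool) (n x y : ℕ) (H : KHypergraph 3) (c : Bool) (R : Finset ℕ) : Prop :=
  R.card = n - 2 ∧ x ∉ R ∧ y ∉ R ∧
  (∀ w ∈ R, ({x, y, w} : Finset ℕ) ∈ H.edges) ∧
  (∀ t ∈ (insert x (insert y R)).powersetCard 3, ¬(x ∈ t ∧ y ∈ t) → χ₀ t = c)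

lemma card_triple {x y w : ℕ} (hxy : x ≠ y) (hwx : w ≠ x) (hwy : w ≠ y) :
    ({x, y, w} : Finset ℕ).card = 3 := by
  rw [Finset.card_insert_of_notMem (by simp [hxy, Ne.symm hwx]),
      Finset.card_insert_of_notMem (by simp [Ne.symm hwy])]
  rfl

lemma erase_triple {x y w : ℕ} (hxy : x ≠ y) (hwx : w ≠ x) (hwy : w ≠ y) :
    ((({x, y, w} : Finset ℕ).erase x).erase y) = {w} := by
  rw [show ({x, y, w} : Finset ℕ) = insert x (insert y {w}) from rfl,
      Finset.erase_insert (by simp [hxy, Ne.symm hwx]),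
      Finset.erase_insert (by simp [Ne.symm hwy])]

lemma cross {χ₀ : Finset ℕ → Bool} {n x y : ℕ} {H : KHypergraph 3} (hxy : x ≠ y)
    {R R' : Finset ℕ} (h : good χ₀ n x y H true R) (h' : good χ₀ n x y H false R') :
    (R ∩ R').card ≤ 1 := by
  by_contra hlt
  push_neg at hlt
  obtain ⟨w, hw, w', hw', hne⟩ := Finset.one_lt_card.mp hlt
  obtain ⟨hwR, hwR'⟩ := Finset.mem_inter.mp hw
  obtain ⟨hw'R, hw'R'⟩ := Finset.mem_inter.mp hw'
  set t : Finset ℕ := {x, w, w'} with ht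
  have hwx : w ≠ x := fun hh => h.2.1 (hh ▸ hwR)
  have hw'x : w' ≠ x := fun hh => h.2.1 (hh ▸ hw'R)
  have hwy : w ≠ y := fun hh => h.2.2.1 (hh ▸ hwR)
  have hw'y : w' ≠ y := fun hh => h.2.2.1 (hh ▸ hw'R)
  have htc : t.card = 3 := by
    rw [ht, Finset.card_insert_of_notMem (by simp [Ne.symm hwx, Ne.symm hw'x]),
        Finset.card_insert_of_notMem (by simp [hne])]
    rfl
  have hnxy : ¬ (x ∈ t ∧ y ∈ t) := by
    rintro ⟨-, hyt⟩
    rw [ht] at hyt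
    simp only [Finset.mem_insert, Finset.mem_singleton] at hyt
    rcases hyt with h1 | h1 | h1
    · exact hxy h1.symm
    · exact hwy h1.symm
    · exact hw'y h1.symm
  have hmem : ∀ (R₀ : Finset ℕ), w ∈ R₀ → w' ∈ R₀ →
      t ∈ (insert x (insert y R₀)).powersetCard 3 := by
    intro R₀ h1 h2
    refine Finset.mem_powersetCard.mpr ⟨?_, htc⟩
    intro u hu
    rw [ht] at hu
    simp only [Finset.mem_insert, Finset.mem_singleton] at hu
    rcases hu with rfl | rfl | rfl
    · exact Finset.mem_insert_self _ _
    · exact Finset.mem_insert_of_mem (Finset.mem_insert_of_mem h1)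
    · exact Finset.mem_insert_of_mem (Finset.mem_insert_of_mem h2)
  have h1 := h.2.2.2.2 t (hmem R hwR hw'R) hnxy
  have h2 := h'.2.2.2.2 t (hmem R' hwR' hw'R') hnxy
  rw [h1] at h2
  exact Bool.noConfusion h2


/-- Recolor the `x,y`-fan according to membership of the third vertex in `U`. -/
def fanRecolor (x y : ℕ) (U : Finset ℕ) (χ₀ : Finset ℕ → Bool) : Finset ℕ → Bool :=
  fun s => if x ∈ s ∧ y ∈ s then decide (∀ u ∈ (s.erase x).erase y, u ∉ U) else χ₀ s

lemma fanRecolor_neg {x y : ℕ} {U : Finset ℕ} {χ₀ : Finset ℕ → Bool} {s : Finset ℕ}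
    (h : ¬(x ∈ s ∧ y ∈ s)) : fanRecolor x y U χ₀ s = χ₀ s := if_neg h

lemma fanRecolor_pos {x y : ℕ} {U : Finset ℕ} {χ₀ : Finset ℕ → Bool} {s : Finset ℕ}
    (h : x ∈ s ∧ y ∈ s) :
    fanRecolor x y U χ₀ s = decide (∀ u ∈ (s.erase x).erase y, u ∉ U) := if_pos h

/-- The game step: if no `false`-good remainder is inside `U`, then there is a
`true`-good remainder disjoint from `U`. -/
lemma step {n : ℕ} {H : KHypergraph 3} (hn : 4 ≤ n)
    (harr : H.Arrows (completeHG 3 n))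
    {e₀ : Finset ℕ} {x y : ℕ} (hx : x ∈ e₀) (hy : y ∈ e₀) (hxy : x ≠ y)
    {χ₀ : Finset ℕ → Bool}
    (hχ₀ : ∀ f c, ¬((erase1 H e₀).IsCopy (completeHG 3 n) f ∧
      ∀ e ∈ (completeHG 3 n).edges, χ₀ (e.image f) = c))
    (U : Finset ℕ) (hU : ∀ R, good χ₀ n x y H false R → ¬ R ⊆ U) :
    ∃ R, good χ₀ n x y H true R ∧ Disjoint R U := by
  classical
  set χψ : Finset ℕ → Bool := fanRecolor x y U χ₀ with hχψ
  obtain ⟨f, c, hcopy, hmono⟩ := harr χψ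
  obtain ⟨hinj, hmaps, hedge⟩ := hcopy
  set T : Finset ℕ := (Finset.range n).image f with hT
  have hinj' : Set.InjOn f ↑(Finset.range n) := hinj
  have hTcard : T.card = n := by
    rw [hT, Finset.card_image_of_injOn hinj', Finset.card_range]
  have tri : ∀ t : Finset ℕ, t ⊆ T → t.card = 3 → t ∈ H.edges ∧ χψ t = c := by
    intro t ht hcard3
    obtain ⟨e, hes, hei⟩ := Finset.subset_image_iff.mp ht
    have hecard : e.card = 3 := by
      have h1 : (e.image f).card = e.card :=
        Finset.card_image_of_injOn (hinj'.mono (by exact_mod_cast hes))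
      rw [hei, hcard3] at h1
      omega
    have he' : e ∈ (completeHG 3 n).edges := Finset.mem_powersetCard.mpr ⟨hes, hecard⟩
    exact ⟨hei ▸ hedge e he', hei ▸ hmono e he'⟩
  have hxyT : x ∈ T ∧ y ∈ T := by
    by_contra hnot
    refine hχ₀ f c ⟨⟨hinj, hmaps, ?_⟩, ?_⟩
    · intro e he
      refine Finset.mem_erase.mpr ⟨?_, hedge e he⟩
      intro heq
      have hsub : e.image f ⊆ T := Finset.image_subset_image (Finset.mem_powersetCard.mp he).1
      exact hnot ⟨hsub (heq ▸ hx), hsub (heq ▸ hy)⟩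
    · intro e he
      have hsub : e.image f ⊆ T := Finset.image_subset_image (Finset.mem_powersetCard.mp he).1
      have hcond : ¬ (x ∈ e.image f ∧ y ∈ e.image f) :=
        fun ⟨h1, h2⟩ => hnot ⟨hsub h1, hsub h2⟩
      have hm := hmono e he
      rwa [hχψ, fanRecolor_neg hcond] at hm
  obtain ⟨hxT, hyT⟩ := hxyT
  set R : Finset ℕ := (T.erase x).erase y with hR
  have hyx : y ∈ T.erase x := Finset.mem_erase.mpr ⟨Ne.symm hxy, hyT⟩
  have hRcard : R.card = n - 2 := by
    rw [hR, Finset.card_erase_of_mem hyx, Finset.card_erase_of_mem hxT, hTcard]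
    omega
  have hxR : x ∉ R := by
    intro h
    exact Finset.notMem_erase x T (Finset.mem_of_mem_erase h)
  have hyR : y ∉ R := Finset.notMem_erase y _
  have hSeq : insert x (insert y R) = T := by
    rw [hR, Finset.insert_erase hyx, Finset.insert_erase hxT]
  have hRT : R ⊆ T := (Finset.erase_subset _ _).trans (Finset.erase_subset _ _)
  have hwfacts : ∀ w ∈ R, w ∈ T ∧ w ≠ x ∧ w ≠ y := by
    intro w hw
    obtain ⟨hwy, hw2⟩ := Finset.mem_erase.mp hw
    obtain ⟨hwx, hw3⟩ := Finset.mem_erase.mp hw2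
    exact ⟨hw3, hwx, hwy⟩
  have hfan : ∀ w ∈ R, ({x, y, w} : Finset ℕ) ∈ H.edges ∧ χψ {x, y, w} = c := by
    intro w hw
    obtain ⟨hwT, hwx, hwy⟩ := hwfacts w hw
    apply tri
    · intro u hu
      simp only [Finset.mem_insert, Finset.mem_singleton] at hu
      rcases hu with rfl | rfl | rfl
      exacts [hxT, hyT, hwT]
    · exact card_triple hxy hwx hwy
  have hfanval : ∀ w ∈ R, (decide (w ∉ U)) = c := by
    intro w hw
    obtain ⟨hwT, hwx, hwy⟩ := hwfacts w hw
    have h2 := (hfan w hw).2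
    rw [hχψ, fanRecolor_pos ⟨by simp, by simp [Ne.symm hxy]⟩, erase_triple hxy hwx hwy] at h2
    simpa using h2
  have hoff : ∀ t ∈ (insert x (insert y R)).powersetCard 3, ¬(x ∈ t ∧ y ∈ t) → χ₀ t = c := by
    intro t ht hnt
    obtain ⟨hts, htc⟩ := Finset.mem_powersetCard.mp ht
    have h2 := (tri t (hSeq ▸ hts) htc).2
    rwa [hχψ, fanRecolor_neg hnt] at h2
  have hgood : good χ₀ n x y H c R :=
    ⟨hRcard, hxR, hyR, fun w hw => (hfan w hw).1, hoff⟩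
  cases c with
  | true =>
    refine ⟨R, hgood, Finset.disjoint_left.mpr ?_⟩
    intro w hw hwU
    have := hfanval w hw
    simp [hwU] at this
  | false =>
    have hsub : R ⊆ U := by
      intro w hw
      have := hfanval w hw
      simpa using this
    exact absurd hsub (hU R hgood)


/-- Iterating the game: a family of `k` pairwise disjoint `true`-good remainders. -/
lemma family {n : ℕ} {H : KHypergraph 3} (hn : 4 ≤ n)
    (harr : H.Arrows (completeHG 3 n))
    {e₀ : Finset ℕ} {x y : ℕ} (hx : x ∈ e₀) (hy : y ∈ e₀) (hxy : x ≠ y)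
    {χ₀ : Finset ℕ → Bool}
    (hχ₀ : ∀ f c, ¬((erase1 H e₀).IsCopy (completeHG 3 n) f ∧
      ∀ e ∈ (completeHG 3 n).edges, χ₀ (e.image f) = c)) :
    ∀ k, k ≤ n - 2 → ∃ F : Finset (Finset ℕ), F.card = k ∧
      (∀ R ∈ F, good χ₀ n x y H true R) ∧
      (∀ R ∈ F, ∀ R' ∈ F, R ≠ R' → Disjoint R R') := by
  intro k
  induction k with
  | zero => exact fun _ => ⟨∅, by simp, by simp, by simp⟩
  | succ k ih =>
    intro hk1
    obtain ⟨F, hFcard, hFgood, hFdisj⟩ := ih (by omega)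
    set U : Finset ℕ := F.biUnion id with hUdef
    have hUstep : ∀ R', good χ₀ n x y H false R' → ¬ R' ⊆ U := by
      intro R' hg hsub
      have hcard' : R'.card = n - 2 := hg.1
      have hsub2 : R' ⊆ F.biUnion (fun R => R' ∩ R) := by
        intro w hw
        obtain ⟨R, hRF, hwR⟩ := Finset.mem_biUnion.mp (hsub hw)
        exact Finset.mem_biUnion.mpr ⟨R, hRF, Finset.mem_inter.mpr ⟨hw, hwR⟩⟩
      have hle : R'.card ≤ ∑ R ∈ F, (R' ∩ R).card :=
        le_trans (Finset.card_le_card hsub2) (Finset.card_biUnion_le)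
      have hle2 : ∑ R ∈ F, (R' ∩ R).card ≤ ∑ _R ∈ F, 1 := by
        refine Finset.sum_le_sum ?_
        intro R hRF
        have := cross hxy (hFgood R hRF) hg
        rwa [Finset.inter_comm] at this
      rw [Finset.sum_const, smul_eq_mul, mul_one, hFcard] at hle2
      omega
    obtain ⟨Rn, hRngood, hRndisj⟩ := step hn harr hx hy hxy hχ₀ U hUstep
    have hRnU : ∀ R ∈ F, Disjoint Rn R := by
      intro R hRF
      exact Finset.disjoint_of_subset_right (Finset.subset_biUnion_of_mem id hRF) hRndisj
    have hnotmem : Rn ∉ F := by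
      intro hmem
      have h1 : Disjoint Rn Rn := hRnU Rn hmem
      have h2 : Rn = ∅ := by simpa using disjoint_self.mp h1
      have h3 := hRngood.1
      rw [h2] at h3
      simp at h3
      omega
    refine ⟨insert Rn F, ?_, ?_, ?_⟩
    · rw [Finset.card_insert_of_notMem hnotmem, hFcard]
    · intro R hR
      rcases Finset.mem_insert.mp hR with rfl | hR
      · exact hRngood
      · exact hFgood R hR
    · intro R hR R' hR' hne
      rcases Finset.mem_insert.mp hR with h1 | h1
      · rcases Finset.mem_insert.mp hR' with h2 | h2
        · exact absurd (h1.trans h2.symm) hne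
        · exact h1 ▸ hRnU R' h2
      · rcases Finset.mem_insert.mp hR' with h2 | h2
        · exact h2 ▸ (hRnU R h1).symm
        · exact hFdisj R h1 R' h2 hne


/-- Core codegree bound: in a hypergraph `H` that arrows `K_n^{(3)}` such that deleting the
edge `e₀` destroys the arrowing, every pair `x ≠ y` inside `e₀` is contained in at least
`(n-2)²` edges of `H`. -/
lemma pair_codeg {n : ℕ} {H : KHypergraph 3} (hn : 4 ≤ n)
    (harr : H.Arrows (completeHG 3 n))
    {e₀ : Finset ℕ} (he₀ : e₀ ∈ H.edges) {x y : ℕ} (hx : x ∈ e₀) (hy : y ∈ e₀) (hxy : x ≠ y)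
    (hbad : ¬ (erase1 H e₀).Arrows (completeHG 3 n)) :
    (n - 2) * (n - 2) ≤ (H.edges.filter fun e => x ∈ e ∧ y ∈ e).card := by
  classical
  rw [Arrows] at hbad
  push_neg at hbad
  obtain ⟨χ₀, hχ₀⟩ := hbad
  have hχ₀' : ∀ f c, ¬((erase1 H e₀).IsCopy (completeHG 3 n) f ∧
      ∀ e ∈ (completeHG 3 n).edges, χ₀ (e.image f) = c) := by
    intro f c hcon
    obtain ⟨hcopy, hmono⟩ := hcon
    obtain ⟨e, he, hne⟩ := hχ₀ f c hcopy
    exact hne (hmono e he)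
  obtain ⟨F, hFcard, hFgood, hFdisj⟩ := family hn harr hx hy hxy hχ₀' (n - 2) le_rfl
  set A : Finset ℕ :=
    (H.edges.filter fun e => x ∈ e ∧ y ∈ e).biUnion (fun e => (e.erase x).erase y) with hA
  have hsubA : ∀ R ∈ F, R ⊆ A := by
    intro R hRF w hw
    have hg := hFgood R hRF
    have hwx : w ≠ x := fun h => hg.2.1 (h ▸ hw)
    have hwy : w ≠ y := fun h => hg.2.2.1 (h ▸ hw)
    have hmem : ({x, y, w} : Finset ℕ) ∈ H.edges := hg.2.2.2.1 w hw
    refine Finset.mem_biUnion.mpr ⟨{x, y, w}, Finset.mem_filter.mpr ⟨hmem, by simp, by simp⟩, ?_⟩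
    rw [erase_triple hxy hwx hwy]
    exact Finset.mem_singleton_self w
  have hUA : F.biUnion id ⊆ A := by
    intro w hw
    obtain ⟨R, hRF, hwR⟩ := Finset.mem_biUnion.mp hw
    exact hsubA R hRF hwR
  have hcardU : (F.biUnion id).card = (n - 2) * (n - 2) := by
    have hc := Finset.card_biUnion (s := F) (t := id) hFdisj
    rw [hc]
    have h2 : ∀ R ∈ F, (id R).card = n - 2 := fun R hRF => (hFgood R hRF).1
    rw [Finset.sum_congr rfl h2, Finset.sum_const, smul_eq_mul, hFcard]
  have h1 : (n - 2) * (n - 2) ≤ A.card := hcardU ▸ Finset.card_le_card hUA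
  have h2 : A.card ≤ (H.edges.filter fun e => x ∈ e ∧ y ∈ e).card := by
    rw [hA]
    refine le_trans Finset.card_biUnion_le ?_
    have : ∀ e ∈ (H.edges.filter fun e => x ∈ e ∧ y ∈ e), ((e.erase x).erase y).card = 1 := by
      intro e he
      have hmf := Finset.mem_filter.mp he
      have heH : e ∈ H.edges := hmf.1
      have hxe : x ∈ e := hmf.2.1
      have hye : y ∈ e := hmf.2.2
      have hce : e.card = 3 := H.card_eq e heH
      rw [Finset.card_erase_of_mem (Finset.mem_erase.mpr ⟨Ne.symm hxy, hye⟩),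
          Finset.card_erase_of_mem hxe, hce]
    rw [Finset.sum_congr rfl this, Finset.sum_const, smul_eq_mul, mul_one]
  omega


lemma two_mul_choose_two (k : ℕ) : 2 * k.choose 2 = k * (k - 1) := by
  induction k with
  | zero => rfl
  | succ k ih =>
    rw [Nat.choose_succ_succ, Nat.choose_one_right, Nat.mul_add, ih]
    cases k with
    | zero => rfl
    | succ m => simp [Nat.succ_sub_one]; ring

/-- A graph (given as a finite set of 2-element subsets of `ℕ`) with fewer than
`C(m+1,2)` edges is properly `m`-colorable. -/
lemma exists_coloring (m : ℕ) (hm : 1 ≤ m) :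
    ∀ P : Finset (Finset ℕ), (∀ p ∈ P, p.card = 2) → P.card < (m + 1).choose 2 →
      ∃ φ : ℕ → ℕ, (∀ v, φ v < m) ∧
        ∀ p ∈ P, ∀ u ∈ p, ∀ v ∈ p, u ≠ v → φ u ≠ φ v := by
  intro P
  induction P using Finset.strongInductionOn with
  | _ P ih =>
  intro hP2 hPcard
  rcases Finset.eq_empty_or_nonempty P with rfl | hPne
  · exact ⟨fun _ => 0, fun _ => hm, by simp⟩
  set V : Finset ℕ := P.biUnion id with hV
  have hpV : ∀ p ∈ P, p ⊆ V := fun p hp => Finset.subset_biUnion_of_mem id hp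
  by_cases hdeg : ∃ v ∈ V, (P.filter (fun p => v ∈ p)).card < m
  · obtain ⟨v, hvV, hdv⟩ := hdeg
    set P' : Finset (Finset ℕ) := P.filter (fun p => v ∉ p) with hP'
    have hss : P' ⊂ P := by
      obtain ⟨p₀, hp₀, hvp₀⟩ := Finset.mem_biUnion.mp hvV
      refine Finset.ssubset_iff_of_subset (Finset.filter_subset _ _) |>.mpr ⟨p₀, hp₀, ?_⟩
      simp only [hP', Finset.mem_filter, not_and, not_not]
      exact fun _ => hvp₀
    obtain ⟨φ', hφ'lt, hφ'prop⟩ := ih P' hss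
      (fun p hp => hP2 p (Finset.filter_subset _ _ hp))
      (lt_of_le_of_lt (Finset.card_le_card (Finset.filter_subset _ _)) hPcard)
    set N : Finset ℕ :=
      ((P.filter (fun p => v ∈ p)).biUnion (fun p => p.erase v)).image φ' with hN
    have hNcard : N.card < m := by
      have h1 : N.card ≤ ((P.filter (fun p => v ∈ p)).biUnion (fun p => p.erase v)).card :=
        Finset.card_image_le
      have h2 : ((P.filter (fun p => v ∈ p)).biUnion (fun p => p.erase v)).card ≤
          ∑ p ∈ P.filter (fun p => v ∈ p), (p.erase v).card := Finset.card_biUnion_le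
      have h3 : ∀ p ∈ P.filter (fun p => v ∈ p), (p.erase v).card = 1 := by
        intro p hp
        have hmf := Finset.mem_filter.mp hp
        rw [Finset.card_erase_of_mem hmf.2, hP2 p hmf.1]
      rw [Finset.sum_congr rfl h3, Finset.sum_const, smul_eq_mul, mul_one] at h2
      exact lt_of_le_of_lt (le_trans h1 h2) hdv
    have hnotsub : ¬ (Finset.range m ⊆ N) := by
      intro hsub
      have := Finset.card_le_card hsub
      rw [Finset.card_range] at this
      omega
    obtain ⟨a, haR, haN⟩ := Finset.not_subset.mp hnotsub
    have ham : a < m := Finset.mem_range.mp haR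
    refine ⟨Function.update φ' v a, ?_, ?_⟩
    · intro w
      by_cases hwv : w = v
      · rw [hwv, Function.update_self]; exact ham
      · rw [Function.update_of_ne hwv]; exact hφ'lt w
    · intro p hp u hu w hw huw
      by_cases hvp : v ∈ p
      · -- p = {v, other}
        have herase : ∀ z ∈ p, z ≠ v → φ' z ∈ N := by
          intro z hz hzv
          refine Finset.mem_image.mpr ⟨z, ?_, rfl⟩
          exact Finset.mem_biUnion.mpr ⟨p, Finset.mem_filter.mpr ⟨hp, hvp⟩,
            Finset.mem_erase.mpr ⟨hzv, hz⟩⟩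
        by_cases huv : u = v
        · have hwv : w ≠ v := fun h => huw (huv.trans h.symm)
          rw [huv, Function.update_self, Function.update_of_ne hwv]
          intro heq
          exact haN (heq ▸ herase w hw hwv)
        · by_cases hwv : w = v
          · rw [hwv, Function.update_self, Function.update_of_ne huv]
            intro heq
            exact haN (heq ▸ herase u hu huv)
          · -- both differ from v : contradiction with card 2
            exfalso
            have hcard := hP2 p hp
            have hsub : ({v, u, w} : Finset ℕ) ⊆ p := by
              intro z hz
              simp only [Finset.mem_insert, Finset.mem_singleton] at hz
              rcases hz with rfl | rfl | rfl
              exacts [hvp, hu, hw]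
            have h3 : ({v, u, w} : Finset ℕ).card = 3 := by
              rw [Finset.card_insert_of_notMem (by simp [Ne.symm huv, Ne.symm hwv]),
                  Finset.card_insert_of_notMem (by simp [huw])]
              rfl
            have := Finset.card_le_card hsub
            omega
      · -- p avoids v
        have hp' : p ∈ P' := Finset.mem_filter.mpr ⟨hp, hvp⟩
        have huv : u ≠ v := fun h => hvp (h ▸ hu)
        have hwv : w ≠ v := fun h => hvp (h ▸ hw)
        rw [Function.update_of_ne huv, Function.update_of_ne hwv]
        exact hφ'prop p hp' u hu w hw huw
  · -- all degrees ≥ m : too many edges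
    exfalso
    push_neg at hdeg
    have hVne : V.Nonempty := by
      obtain ⟨p₀, hp₀⟩ := hPne
      have h2 : p₀.card = 2 := hP2 p₀ hp₀
      have : p₀.Nonempty := Finset.card_pos.mp (by omega)
      obtain ⟨z, hz⟩ := this
      exact ⟨z, hpV p₀ hp₀ hz⟩
    -- |V| ≥ m+1
    obtain ⟨v₀, hv₀⟩ := hVne
    have hdeg0 : m ≤ (P.filter (fun p => v₀ ∈ p)).card := hdeg v₀ hv₀
    have hinj : m ≤ V.card - 1 := by
      have hmap : ∀ p ∈ P.filter (fun p => v₀ ∈ p),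
          p.erase v₀ ∈ (V.erase v₀).powersetCard 1 := by
        intro p hp
        have hmf := Finset.mem_filter.mp hp
        refine Finset.mem_powersetCard.mpr ⟨?_, ?_⟩
        · intro z hz
          obtain ⟨hzv, hzp⟩ := Finset.mem_erase.mp hz
          exact Finset.mem_erase.mpr ⟨hzv, hpV p hmf.1 hzp⟩
        · rw [Finset.card_erase_of_mem hmf.2, hP2 p hmf.1]
      have hinjOn : ∀ p ∈ P.filter (fun p => v₀ ∈ p), ∀ q ∈ P.filter (fun p => v₀ ∈ p),
          p.erase v₀ = q.erase v₀ → p = q := by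
        intro p hp q hq heq
        have hvp := (Finset.mem_filter.mp hp).2
        have hvq := (Finset.mem_filter.mp hq).2
        rw [← Finset.insert_erase hvp, ← Finset.insert_erase hvq, heq]
      have hle := Finset.card_le_card_of_injOn _ hmap hinjOn
      rw [Finset.card_powersetCard, Finset.card_erase_of_mem hv₀, Nat.choose_one_right] at hle
      omega
    have hVcard : m + 1 ≤ V.card := by omega
    -- double counting
    have hdouble : ∑ v ∈ V, (P.filter (fun p => v ∈ p)).card = 2 * P.card := by
      have h1 : ∀ v ∈ V, (P.filter (fun p => v ∈ p)).card =
          ∑ p ∈ P, if v ∈ p then 1 else 0 := by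
        intro v _
        rw [Finset.card_filter]
      rw [Finset.sum_congr rfl h1, Finset.sum_comm]
      have h2 : ∀ p ∈ P, (∑ v ∈ V, if v ∈ p then 1 else 0) = 2 := by
        intro p hp
        rw [← Finset.card_filter]
        have : V.filter (fun v => v ∈ p) = p := by
          apply Finset.Subset.antisymm
          · intro z hz; exact (Finset.mem_filter.mp hz).2
          · intro z hz; exact Finset.mem_filter.mpr ⟨hpV p hp hz, hz⟩
        rw [this, hP2 p hp]
      rw [Finset.sum_congr rfl h2, Finset.sum_const, smul_eq_mul, mul_comm]
    have hlow : V.card * m ≤ ∑ v ∈ V, (P.filter (fun p => v ∈ p)).card := by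
      calc V.card * m = ∑ _v ∈ V, m := by rw [Finset.sum_const, smul_eq_mul]
        _ ≤ _ := Finset.sum_le_sum (fun v hv => hdeg v hv)
    have hfinal : (m + 1) * m ≤ 2 * P.card := by
      calc (m + 1) * m ≤ V.card * m := Nat.mul_le_mul_right m hVcard
        _ ≤ _ := le_trans hlow (le_of_eq hdouble)
    have h2C : 2 * (m + 1).choose 2 = (m + 1) * m := by
      rw [two_mul_choose_two]; simp
    omega


/-- The shadow (set of pairs covered by edges) of a hypergraph arrowing `K_n^{(3)}` has at
least `C(r,2)` elements, where `r` is the Ramsey number. -/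
lemma shadow_card {n : ℕ} (hn : 4 ≤ n) {H : KHypergraph 3}
    (harr : H.Arrows (completeHG 3 n)) :
    (ramsey (completeHG 3 n)).choose 2 ≤ (H.edges.biUnion (fun e => e.powersetCard 2)).card := by
  classical
  set r : ℕ := ramsey (completeHG 3 n) with hr
  set P : Finset (Finset ℕ) := H.edges.biUnion (fun e => e.powersetCard 2) with hP
  have hP2 : ∀ p ∈ P, p.card = 2 := by
    intro p hp
    obtain ⟨e, _, hpe⟩ := Finset.mem_biUnion.mp hp
    exact (Finset.mem_powersetCard.mp hpe).2
  by_contra hlt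
  push_neg at hlt
  have hr2 : 2 ≤ r := by
    by_contra hr2
    push_neg at hr2
    rw [Nat.choose_eq_zero_of_lt hr2] at hlt
    omega
  have hm : 1 ≤ r - 1 := by omega
  obtain ⟨φ, hφlt, hφprop⟩ := exists_coloring (r - 1) hm P hP2 (by
    have : r - 1 + 1 = r := by omega
    rw [this]; exact hlt)
  -- a bad coloring of the complete hypergraph on r-1 vertices
  have hnot : ¬ (completeHG 3 (r - 1)).Arrows (completeHG 3 n) := by
    have h1 : sInf { N | (completeHG 3 N).Arrows (completeHG 3 n) } = r := by
      rw [hr, KHypergraph.ramsey]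
    have h2 : r - 1 < sInf { N | (completeHG 3 N).Arrows (completeHG 3 n) } := by
      rw [h1]; omega
    exact Nat.notMem_of_lt_sInf h2
  rw [Arrows] at hnot
  push_neg at hnot
  obtain ⟨σ, hσ⟩ := hnot
  obtain ⟨f, c, ⟨hinj, hmaps, hedge⟩, hmono⟩ := harr (fun s => σ (s.image φ))
  have hinj' : Set.InjOn f ↑(Finset.range n) := hinj
  -- φ ∘ f is injective on range n
  have hinjφ : Set.InjOn (φ ∘ f) ↑(Finset.range n) := by
    intro a ha b hb heq
    by_cases hab : a = b
    · exact hab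
    · exfalso
      have haf : a ∈ Finset.range n := ha
      have hbf : b ∈ Finset.range n := hb
      have hfa : f a ≠ f b := fun h => hab (hinj' ha hb h)
      have hne : ((Finset.range n) \ {a, b}).Nonempty := by
        rw [Finset.nonempty_iff_ne_empty]
        intro hemp
        have hsub : Finset.range n ⊆ {a, b} := by
          rw [← Finset.sdiff_eq_empty_iff_subset]; exact hemp
        have h1 := Finset.card_le_card hsub
        rw [Finset.card_range] at h1
        have h2 : ({a, b} : Finset ℕ).card ≤ 2 :=
          le_trans (Finset.card_insert_le a {b}) (by simp)
        omega
      obtain ⟨c₀, hc₀⟩ := hne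
      obtain ⟨hc₀r, hc₀ab⟩ := Finset.mem_sdiff.mp hc₀
      have hc₀a : c₀ ≠ a := fun h => hc₀ab (by simp [h])
      have hc₀b : c₀ ≠ b := fun h => hc₀ab (by simp [h])
      set e : Finset ℕ := {a, b, c₀} with he
      have heE : e ∈ (completeHG 3 n).edges := by
        refine Finset.mem_powersetCard.mpr ⟨?_, ?_⟩
        · intro z hz
          rw [he] at hz
          simp only [Finset.mem_insert, Finset.mem_singleton] at hz
          rcases hz with rfl | rfl | rfl
          exacts [haf, hbf, hc₀r]
        · rw [he, Finset.card_insert_of_notMem (by simp [hab, Ne.symm hc₀a]),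
              Finset.card_insert_of_notMem (by simp [Ne.symm hc₀b])]
          rfl
      have htE : e.image f ∈ H.edges := hedge e heE
      have hpP : ({f a, f b} : Finset ℕ) ∈ P := by
        refine Finset.mem_biUnion.mpr ⟨e.image f, htE, ?_⟩
        refine Finset.mem_powersetCard.mpr ⟨?_, ?_⟩
        · intro z hz
          simp only [Finset.mem_insert, Finset.mem_singleton] at hz
          rcases hz with rfl | rfl
          · exact Finset.mem_image_of_mem f (by rw [he]; simp)
          · exact Finset.mem_image_of_mem f (by rw [he]; simp)
        · rw [Finset.card_insert_of_notMem (by simp [hfa]), Finset.card_singleton]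
      exact hφprop ({f a, f b}) hpP (f a) (by simp) (f b) (by simp) hfa heq
  have hmapsφ : Set.MapsTo (φ ∘ f) ↑(Finset.range n) ↑(Finset.range (r - 1)) := by
    intro a _
    exact Finset.mem_coe.mpr (Finset.mem_range.mpr (hφlt (f a)))
  have hedgeφ : ∀ e ∈ (completeHG 3 n).edges,
      e.image (φ ∘ f) ∈ (completeHG 3 (r - 1)).edges := by
    intro e he
    refine Finset.mem_powersetCard.mpr ⟨?_, ?_⟩
    · intro z hz
      obtain ⟨a, _, rfl⟩ := Finset.mem_image.mp hz
      exact Finset.mem_range.mpr (hφlt (f a))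
    · have hsub : ↑e ⊆ (↑(Finset.range n) : Set ℕ) := by
        exact_mod_cast (Finset.mem_powersetCard.mp he).1
      rw [Finset.card_image_of_injOn (hinjφ.mono hsub), (completeHG 3 n).card_eq e he]
  obtain ⟨e, he, hne⟩ := hσ (φ ∘ f) c ⟨hinjφ, hmapsφ, hedgeφ⟩
  apply hne
  have hm2 := hmono e he
  rwa [Finset.image_image] at hm2


/-- Double counting: summing, over the pairs of the shadow, the number of edges containing
the pair, gives exactly three times the number of edges. -/
lemma double_count (H : KHypergraph 3) :
    ∑ p ∈ H.edges.biUnion (fun e => e.powersetCard 2),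
      (H.edges.filter (fun e => p ⊆ e)).card = 3 * H.edges.card := by
  classical
  set P : Finset (Finset ℕ) := H.edges.biUnion (fun e => e.powersetCard 2) with hP
  have h1 : ∀ p ∈ P, (H.edges.filter (fun e => p ⊆ e)).card
      = ∑ e ∈ H.edges, if p ⊆ e then 1 else 0 := by
    intro p _
    rw [Finset.card_filter]
  rw [Finset.sum_congr rfl h1, Finset.sum_comm]
  have h2 : ∀ e ∈ H.edges, (∑ p ∈ P, if p ⊆ e then 1 else 0) = 3 := by
    intro e he
    rw [← Finset.card_filter]
    have heq : P.filter (fun p => p ⊆ e) = e.powersetCard 2 := by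
      apply Finset.Subset.antisymm
      · intro p hp
        obtain ⟨hpP, hpe⟩ := Finset.mem_filter.mp hp
        obtain ⟨e', _, hpe'⟩ := Finset.mem_biUnion.mp hpP
        exact Finset.mem_powersetCard.mpr ⟨hpe, (Finset.mem_powersetCard.mp hpe').2⟩
      · intro p hp
        obtain ⟨hpe, _⟩ := Finset.mem_powersetCard.mp hp
        exact Finset.mem_filter.mpr ⟨Finset.mem_biUnion.mpr ⟨e, he, hp⟩, hpe⟩
    rw [heq, Finset.card_powersetCard, H.card_eq e he]
    rfl
  rw [Finset.sum_congr rfl h2, Finset.sum_const, smul_eq_mul, mul_comm]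

/-- The natural-number core bound for a minimal arrowing hypergraph. -/
lemma main_bound {n : ℕ} (hn : 4 ≤ n) {H : KHypergraph 3}
    (harr : H.Arrows (completeHG 3 n))
    (hmin : ∀ e₀ ∈ H.edges, ¬ (erase1 H e₀).Arrows (completeHG 3 n)) :
    (ramsey (completeHG 3 n)).choose 2 * ((n - 2) * (n - 2)) ≤ 3 * H.edges.card := by
  classical
  set P : Finset (Finset ℕ) := H.edges.biUnion (fun e => e.powersetCard 2) with hP
  have hcodeg : ∀ p ∈ P, (n - 2) * (n - 2) ≤ (H.edges.filter (fun e => p ⊆ e)).card := by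
    intro p hp
    obtain ⟨e₀, he₀, hpe₀⟩ := Finset.mem_biUnion.mp hp
    obtain ⟨hsub, hc2⟩ := Finset.mem_powersetCard.mp hpe₀
    obtain ⟨x, y, hxy, rfl⟩ := Finset.card_eq_two.mp hc2
    have hx : x ∈ e₀ := hsub (by simp)
    have hy : y ∈ e₀ := hsub (by simp)
    have hpc := pair_codeg hn harr he₀ hx hy hxy (hmin e₀ he₀)
    have hfe : (H.edges.filter fun e => x ∈ e ∧ y ∈ e)
        = H.edges.filter (fun e => ({x, y} : Finset ℕ) ⊆ e) := by
      apply Finset.filter_congr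
      intro e _
      simp [Finset.insert_subset_iff]
    rw [hfe] at hpc
    exact hpc
  calc (ramsey (completeHG 3 n)).choose 2 * ((n - 2) * (n - 2))
      ≤ P.card * ((n - 2) * (n - 2)) :=
        Nat.mul_le_mul_right _ (shadow_card hn harr)
    _ = ∑ _p ∈ P, (n - 2) * (n - 2) := by rw [Finset.sum_const, smul_eq_mul]
    _ ≤ ∑ p ∈ P, (H.edges.filter (fun e => p ⊆ e)).card := Finset.sum_le_sum hcodeg
    _ = 3 * H.edges.card := double_count H

end SR0

/-- For `n ≥ 4`,
`R̂(K_n^(3)) ≥ (n²/96)·C(R(K_n^(3)), 2)`. -/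
theorem stmt0 (n : ℕ) (hn : 4 ≤ n) :
    ((n : ℝ) ^ 2 / 96) * ((KHypergraph.ramsey (KHypergraph.completeHG 3 n)).choose 2 : ℝ) ≤
      (KHypergraph.sizeRamsey (KHypergraph.completeHG 3 n) : ℝ) := by
  classical
  by_cases hS : { m | ∃ H : KHypergraph 3, H.Arrows (KHypergraph.completeHG 3 n) ∧
      H.edges.card = m }.Nonempty
  · obtain ⟨H, hH, hcard⟩ := Nat.sInf_mem hS
    have hmin : ∀ e₀ ∈ H.edges, ¬ (SR0.erase1 H e₀).Arrows (KHypergraph.completeHG 3 n) := by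
      intro e₀ he₀ harr'
      have hmem : (SR0.erase1 H e₀).edges.card ∈
          { m | ∃ H : KHypergraph 3, H.Arrows (KHypergraph.completeHG 3 n) ∧
            H.edges.card = m } := ⟨SR0.erase1 H e₀, harr', rfl⟩
      have hle := Nat.sInf_le hmem
      have hclt : (SR0.erase1 H e₀).edges.card < H.edges.card := by
        have h1 : (SR0.erase1 H e₀).edges.card = H.edges.card - 1 := by
          show (H.edges.erase e₀).card = H.edges.card - 1
          exact Finset.card_erase_of_mem he₀
        have h2 : 1 ≤ H.edges.card := Finset.card_pos.mpr ⟨e₀, he₀⟩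
        omega
      omega
    have hmain := SR0.main_bound hn hH hmin
    have hsz : KHypergraph.sizeRamsey (KHypergraph.completeHG 3 n) = H.edges.card := by
      rw [KHypergraph.sizeRamsey, ← hcard]
    rw [hsz]
    -- move to the reals
    set r : ℕ := KHypergraph.ramsey (KHypergraph.completeHG 3 n) with hr
    have hcast : (r.choose 2 : ℝ) * (((n : ℝ) - 2) * ((n : ℝ) - 2)) ≤ 3 * (H.edges.card : ℝ) := by
      have h2n : (2 : ℕ) ≤ n := by omega
      exact_mod_cast hmain
    have hn' : (4 : ℝ) ≤ (n : ℝ) := by exact_mod_cast hn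
    have hCnn : (0 : ℝ) ≤ (r.choose 2 : ℝ) := Nat.cast_nonneg _
    have h32 : (n : ℝ) ^ 2 ≤ 32 * (((n : ℝ) - 2) * ((n : ℝ) - 2)) := by nlinarith
    have hkey : (n : ℝ) ^ 2 * (r.choose 2 : ℝ) ≤ 96 * (H.edges.card : ℝ) := by
      have hle1 : (n : ℝ) ^ 2 * (r.choose 2 : ℝ)
          ≤ (32 * (((n : ℝ) - 2) * ((n : ℝ) - 2))) * (r.choose 2 : ℝ) :=
        mul_le_mul_of_nonneg_right h32 hCnn
      nlinarith
    linarith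
  · have hempty : { N | (KHypergraph.completeHG 3 N).Arrows (KHypergraph.completeHG 3 n) } = ∅ := by
      ext N
      simp only [Set.mem_setOf_eq, Set.mem_empty_iff_false, iff_false]
      intro hN
      exact hS ⟨(KHypergraph.completeHG 3 N).edges.card, KHypergraph.completeHG 3 N, hN, rfl⟩
    have hr0 : KHypergraph.ramsey (KHypergraph.completeHG 3 n) = 0 := by
      rw [KHypergraph.ramsey, hempty, Nat.sInf_empty]
    rw [hr0]
    norm_num
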